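/- arXiv:1910.01014 — 2 statements merged into one kernel-verified Lean document; each statement's English description precedes it below -/
import Mathlib

section
/- For a small category A, the codensity monad of the Yoneda embedding y : A → Set^{A^op}, i.e. the right Kan extension Ran_y y with its canonical monad structure, is isomorphic as a monad to the monad Spec ∘ O induced on Set^{A^op} by the Isbell adjunction O ⊣ Spec. -/
/-! STATEMENT 1: the codensity monad of the Yoneda embedding is isomorphic, as a monad,
to the monad induced by the Isbell adjunction `O ⊣ Spec`. -/

namespace CategoryTheory

open Functor Limits

noncomputable section

universe w w₂ v v₂ u u₂

namespace Codensity

variable {C : Type u} [Category.{v} C] {D : Type u₂} [Category.{v₂} D]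
  (F : C ⥤ D) [F.HasRightKanExtension F]

/-- The underlying endofunctor of the codensity monad of `F`: the right Kan
extension of `F` along itself. -/
abbrev T : D ⥤ D := F.rightKanExtension F

/-- The counit of the right Kan extension. -/
abbrev ε : F ⋙ T F ⟶ F := F.rightKanExtensionCounit F

/-- The unit of the codensity monad. -/
def unit : 𝟭 D ⟶ T F :=
  (T F).liftOfIsRightKanExtension (ε F) (𝟭 D) F.rightUnitor.hom

/-- The multiplication of the codensity monad. -/
def mul : T F ⋙ T F ⟶ T F :=
  (T F).liftOfIsRightKanExtension (ε F) (T F ⋙ T F)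
    ((Functor.associator F (T F) (T F)).inv ≫ whiskerRight (ε F) (T F) ≫ ε F)

lemma unit_fac (X : C) : (unit F).app (F.obj X) ≫ (ε F).app X = 𝟙 (F.obj X) := by
  simp [unit]

lemma mul_fac (X : C) :
    (mul F).app (F.obj X) ≫ (ε F).app X
      = (T F).map ((ε F).app X) ≫ (ε F).app X := by
  have h := (T F).liftOfIsRightKanExtension_fac_app (ε F)
    (T F ⋙ T F) ((Functor.associator F (T F) (T F)).inv ≫ whiskerRight (ε F) (T F) ≫ ε F) X
  simp only [NatTrans.comp_app, Functor.associator_inv_app, whiskerRight_app,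
    Functor.comp_obj, Category.id_comp] at h
  simpa [mul] using h

lemma left_unit' : whiskerLeft (T F) (unit F) ≫ mul F = (T F).rightUnitor.hom := by
  apply (T F).hom_ext_of_isRightKanExtension (ε F)
  ext X
  have h := (unit F).naturality ((ε F).app X)
  simp only [Functor.comp_obj, Functor.id_obj, Functor.id_map] at h
  simp only [NatTrans.comp_app, whiskerLeft_app, Functor.rightUnitor_hom_app,
    Functor.comp_obj, Functor.id_obj, Category.id_comp, Category.assoc]
  rw [mul_fac, ← Category.assoc, ← h, Category.assoc, unit_fac]
  simp

lemma right_unit' : whiskerRight (unit F) (T F) ≫ mul F = (T F).leftUnitor.hom := by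
  apply (T F).hom_ext_of_isRightKanExtension (ε F)
  ext X
  simp only [NatTrans.comp_app, whiskerRight_app, whiskerLeft_app, Functor.leftUnitor_hom_app,
    Functor.comp_obj, Functor.id_obj, Category.id_comp, Category.assoc]
  rw [mul_fac, ← Category.assoc, ← Functor.map_comp, unit_fac]
  simp

lemma assoc' :
    whiskerRight (mul F) (T F) ≫ mul F
      = (Functor.associator _ _ _).hom ≫ whiskerLeft (T F) (mul F) ≫ mul F := by
  apply (T F).hom_ext_of_isRightKanExtension (ε F)
  ext X
  have h := (mul F).naturality ((ε F).app X)
  simp only [Functor.comp_obj, Functor.comp_map] at h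
  simp only [NatTrans.comp_app, whiskerRight_app, whiskerLeft_app, Functor.associator_hom_app,
    Functor.comp_obj, Category.id_comp, Category.assoc]
  conv_lhs => rw [mul_fac, ← Category.assoc, ← Functor.map_comp, mul_fac, Functor.map_comp,
    Category.assoc]
  conv_rhs => rw [mul_fac, ← Category.assoc, ← h, Category.assoc, mul_fac]

end Codensity

/-- The codensity monad of a functor `F`, defined as the right Kan extension of `F`
along itself, with its canonical monad structure. -/
def codensityMonad {C : Type u} [Category.{v} C] {D : Type u₂} [Category.{v₂} D]
    (F : C ⥤ D) [F.HasRightKanExtension F] : Monad D where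
  toFunctor := Codensity.T F
  η := Codensity.unit F
  μ := Codensity.mul F
  left_unit X := by
    simpa using NatTrans.congr_app (Codensity.left_unit' F) X
  right_unit X := by
    simpa using NatTrans.congr_app (Codensity.right_unit' F) X
  assoc X := by
    simpa using NatTrans.congr_app (Codensity.assoc' F) X

end

end CategoryTheory

universe u'

open CategoryTheory Functor Limits

noncomputable section

/-- The copresheaf embedding `y♯ : A ⥤ (Set^A)ᵒᵖ`, `a ↦ A(a, -)`. -/
def ysharp (A : Type u') [SmallCategory A] : A ⥤ (A ⥤ Type u')ᵒᵖ := coyoneda.rightOp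

namespace IsbellAux
variable (A : Type u') [SmallCategory A]

instance full_ysharp : (ysharp A).Full := inferInstanceAs (Functor.Full coyoneda.rightOp)
instance faithful_ysharp : (ysharp A).Faithful := inferInstanceAs (Functor.Faithful coyoneda.rightOp)

abbrev O : (Aᵒᵖ ⥤ Type u') ⥤ (A ⥤ Type u')ᵒᵖ := yoneda.leftKanExtension (ysharp A)
abbrev Spec : (A ⥤ Type u')ᵒᵖ ⥤ (Aᵒᵖ ⥤ Type u') := (ysharp A).rightKanExtension yoneda
abbrev σ : ysharp A ⋙ Spec A ⟶ yoneda := (ysharp A).rightKanExtensionCounit yoneda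

def σPointwise : (RightExtension.mk (Spec A) (σ A)).IsPointwiseRightKanExtension :=
  isPointwiseRightKanExtensionOfIsRightKanExtension _ (σ A)

instance : IsIso (σ A) := (σPointwise A).isIso_hom

/-- inverse of σ -/
abbrev s : (yoneda : A ⥤ _) ⟶ ysharp A ⋙ Spec A := inv (σ A)

variable {A} (adj : O A ⊣ Spec A)

/-- the mate of `s` -/
def t : yoneda ⋙ O A ⟶ ysharp A where
  app a := (O A).map ((s A).app a) ≫ adj.counit.app ((ysharp A).obj a)
  naturality a b f := by
    dsimp
    rw [← Functor.map_comp_assoc, (s A).naturality f]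
    dsimp
    rw [Functor.map_comp_assoc, adj.counit_naturality, Category.assoc]

def ε' : yoneda ⋙ (O A ⋙ Spec A) ⟶ yoneda := whiskerRight (t adj) (Spec A) ≫ σ A

@[simp] lemma ε'_app (a : A) :
    (ε' adj).app a = (Spec A).map ((t adj).app a) ≫ (σ A).app a := rfl


section
variable {P : Aᵒᵖ ⥤ Type u'} {a b : A}

lemma σs (a : A) : (σ A).app a ≫ (s A).app a = 𝟙 _ := by
  have := congr_app (IsIso.hom_inv_id (σ A)) a
  simpa using this

lemma sσ (a : A) : (s A).app a ≫ (σ A).app a = 𝟙 _ := by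
  have := congr_app (IsIso.inv_hom_id (σ A)) a
  simpa using this

def Φ (f : P ⟶ yoneda.obj a) : (O A).obj P ⟶ (ysharp A).obj a := (O A).map f ≫ (t adj).app a

def Ψ (g : (O A).obj P ⟶ (ysharp A).obj a) : P ⟶ yoneda.obj a :=
  adj.unit.app P ≫ (Spec A).map g ≫ (σ A).app a

lemma Ψ_Φ (f : P ⟶ yoneda.obj a) : Ψ adj (Φ adj f) = f := by
  dsimp [Ψ, Φ, t]
  rw [Functor.map_comp, Functor.map_comp, ← Functor.comp_map (O A) (Spec A) f,
    ← Functor.comp_map (O A) (Spec A) ((s A).app a)]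
  simp only [Category.assoc]
  rw [← adj.unit.naturality_assoc f]
  dsimp only [Functor.id_obj, Functor.id_map]
  rw [← adj.unit.naturality_assoc ((s A).app a)]
  dsimp only [Functor.id_obj, Functor.id_map, Functor.comp_obj]
  rw [adj.right_triangle_components_assoc, sσ, Category.comp_id]

lemma Φ_Ψ (g : (O A).obj P ⟶ (ysharp A).obj a) : Φ adj (Ψ adj g) = g := by
  dsimp [Ψ, Φ, t]
  rw [Functor.map_comp, Functor.map_comp, Category.assoc, Category.assoc,
    ← Functor.map_comp_assoc (O A) ((σ A).app a) ((s A).app a), σs,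
    CategoryTheory.Functor.map_id, Category.id_comp,
    ← Functor.comp_map (Spec A) (O A) g, adj.counit.naturality g]
  dsimp only [Functor.id_obj, Functor.id_map]
  rw [← Category.assoc, adj.left_triangle_components, Category.id_comp]

lemma Φ_comp (f : P ⟶ yoneda.obj a) (r : a ⟶ b) :
    Φ adj (f ≫ yoneda.map r) = Φ adj f ≫ (ysharp A).map r := by
  dsimp [Φ]
  rw [Functor.map_comp, Category.assoc, ← Functor.comp_map yoneda (O A) r,
    (t adj).naturality r]
  simp only [Category.assoc]

lemma Ψ_comp (g : (O A).obj P ⟶ (ysharp A).obj a) (r : a ⟶ b) :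
    Ψ adj (g ≫ (ysharp A).map r) = Ψ adj g ≫ yoneda.map r := by
  dsimp [Ψ]
  rw [Functor.map_comp, Category.assoc, ← Functor.comp_map (ysharp A) (Spec A) r,
    (σ A).naturality r, Category.assoc, Category.assoc]

lemma conj {a : A} (g : (O A).obj (yoneda.obj a) ⟶ (ysharp A).obj a) :
    (O A).map ((Spec A).map g ≫ (σ A).app a) ≫ (t adj).app a
      = adj.counit.app ((O A).obj (yoneda.obj a)) ≫ g := by
  dsimp [t]
  rw [Functor.map_comp]
  simp only [Category.assoc]
  rw [← Functor.map_comp_assoc (O A) ((σ A).app a) ((s A).app a), σs,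
    CategoryTheory.Functor.map_id, Category.id_comp,
    ← Functor.comp_map (Spec A) (O A) g, adj.counit.naturality g]
  dsimp only [Functor.id_obj, Functor.id_map]

end

lemma eq1 (a : A) : adj.unit.app (yoneda.obj a) ≫ (ε' adj).app a = 𝟙 (yoneda.obj a) := by
  have h := Ψ_Φ adj (𝟙 (yoneda.obj a))
  dsimp [Ψ, Φ] at h
  rw [CategoryTheory.Functor.map_id, Category.id_comp] at h
  rw [ε'_app]
  exact h

lemma eq2 (a : A) :
    (Spec A).map (adj.counit.app ((O A).obj (yoneda.obj a))) ≫ (ε' adj).app a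
      = (O A ⋙ Spec A).map ((ε' adj).app a) ≫ (ε' adj).app a := by
  dsimp
  rw [← Functor.map_comp_assoc, ← Functor.map_comp_assoc]
  congr 2
  exact (conj adj ((t adj).app a)).symm


section
variable (P : Aᵒᵖ ⥤ Type u')

@[simps] def Efun : StructuredArrow P (yoneda (C := A)) ⥤ StructuredArrow ((O A).obj P) (ysharp A) where
  obj g := StructuredArrow.mk (Φ adj g.hom)
  map {g g'} m := StructuredArrow.homMk m.right (by
    dsimp
    rw [← Φ_comp adj g.hom m.right, StructuredArrow.w m])

@[simps] def Einv : StructuredArrow ((O A).obj P) (ysharp A) ⥤ StructuredArrow P (yoneda (C := A)) where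
  obj h := StructuredArrow.mk (Ψ adj h.hom)
  map {h h'} n := StructuredArrow.homMk n.right (by
    dsimp
    rw [← Ψ_comp adj h.hom n.right, StructuredArrow.w n])

def Eequiv : StructuredArrow P (yoneda (C := A)) ≌ StructuredArrow ((O A).obj P) (ysharp A) where
  functor := Efun adj P
  inverse := Einv adj P
  unitIso := NatIso.ofComponents
    (fun g => StructuredArrow.isoMk (Iso.refl _) (by
      show g.hom ≫ yoneda.map (𝟙 g.right) = Ψ adj (Φ adj g.hom)
      rw [CategoryTheory.Functor.map_id, Category.comp_id, Ψ_Φ]))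
      (fun f => by ext; exact (Category.comp_id _).trans (Category.id_comp _).symm)
  counitIso := NatIso.ofComponents
    (fun h => StructuredArrow.isoMk (Iso.refl _) (by
      show Φ adj (Ψ adj h.hom) ≫ (ysharp A).map (𝟙 h.right) = h.hom
      rw [CategoryTheory.Functor.map_id, Category.comp_id, Φ_Ψ]))
      (fun f => by ext; exact (Category.comp_id _).trans (Category.id_comp _).symm)
  functor_unitIso_comp X := by ext; exact Category.comp_id _

def isPtw : (RightExtension.mk (O A ⋙ Spec A) (ε' adj)).IsPointwiseRightKanExtension :=
  fun P => by
    have h2 := ((σPointwise A) ((O A).obj P)).whiskerEquivalence (Eequiv adj P)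
    exact h2.ofIsoLimit (Cones.ext (Iso.refl _) (fun g => by
      dsimp [Eequiv, Φ]
      show (Spec A).map ((O A).map g.hom ≫ (t adj).app g.right) ≫ (σ A).app g.right
        = 𝟙 _ ≫ (O A ⋙ Spec A).map g.hom ≫ (Spec A).map ((t adj).app g.right) ≫ (σ A).app g.right
      simp [Functor.map_comp]))

instance isRKE : (O A ⋙ Spec A).IsRightKanExtension (ε' adj) :=
  (isPtw adj).isRightKanExtension

end



def φ : Codensity.T (yoneda (C := A)) ⟶ O A ⋙ Spec A :=
  (O A ⋙ Spec A).liftOfIsRightKanExtension (ε' adj) _ (Codensity.ε (yoneda (C := A)))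

lemma φ_fac : whiskerLeft yoneda (φ adj) ≫ ε' adj = Codensity.ε (yoneda (C := A)) :=
  (O A ⋙ Spec A).liftOfIsRightKanExtension_fac (ε' adj) _ (Codensity.ε (yoneda (C := A)))

lemma φ_fac_app (a : A) :
    (φ adj).app (yoneda.obj a) ≫ (ε' adj).app a = (Codensity.ε (yoneda (C := A))).app a :=
  (O A ⋙ Spec A).liftOfIsRightKanExtension_fac_app (ε' adj) _ (Codensity.ε (yoneda (C := A))) a

instance : IsIso (φ adj) :=
  (Functor.isRightKanExtension_iff_isIso (φ adj) (ε' adj) (Codensity.ε (yoneda (C := A)))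
    (φ_fac adj)).mp inferInstance

lemma unit_compat : Codensity.unit (yoneda (C := A)) ≫ φ adj = adj.unit := by
  apply (O A ⋙ Spec A).hom_ext_of_isRightKanExtension (ε' adj)
  ext a : 2
  simp only [NatTrans.comp_app, whiskerLeft_app, Category.assoc]
  rw [φ_fac_app adj a, Codensity.unit_fac (yoneda (C := A)) a, eq1 adj a]

lemma mul_compat : Codensity.mul (yoneda (C := A)) ≫ φ adj
    = whiskerRight (φ adj) (Codensity.T (yoneda (C := A)))
        ≫ whiskerLeft (O A ⋙ Spec A) (φ adj) ≫ adj.toMonad.μ := by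
  apply (O A ⋙ Spec A).hom_ext_of_isRightKanExtension (ε' adj)
  ext a : 2
  simp only [NatTrans.comp_app, whiskerLeft_app, whiskerRight_app, Category.assoc]
  rw [φ_fac_app adj a, Codensity.mul_fac (yoneda (C := A)) a]
  dsimp only [Adjunction.toMonad]
  simp only [NatTrans.comp_app, Functor.whiskerRight_app, Functor.whiskerLeft_app, Category.assoc]
  rw [eq2 adj a]
  have hnat : (φ adj).app ((O A ⋙ Spec A).obj (yoneda.obj a))
        ≫ (O A ⋙ Spec A).map ((ε' adj).app a)
      = (Codensity.T (yoneda (C := A))).map ((ε' adj).app a) ≫ (φ adj).app (yoneda.obj a) :=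
    ((φ adj).naturality ((ε' adj).app a)).symm
  rw [← Category.assoc ((φ adj).app ((O A ⋙ Spec A).obj (yoneda.obj a))), hnat,
    Category.assoc, φ_fac_app adj a,
    ← Functor.map_comp_assoc (Codensity.T (yoneda (C := A))) ((φ adj).app (yoneda.obj a))
      ((ε' adj).app a), φ_fac_app adj a]

end IsbellAux

/-- The codensity monad of the Yoneda embedding is isomorphic to the monad induced by the
Isbell adjunction `O = Lan_y y♯ ⊣ Spec = Ran_{y♯} y`. -/
theorem codensityMonad_yoneda_iso_isbell_monad (A : Type u') [SmallCategory A]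
    (adj : yoneda.leftKanExtension (ysharp A) ⊣ (ysharp A).rightKanExtension yoneda) :
    Nonempty ((codensityMonad (yoneda (C := A))) ≅ adj.toMonad) := by
  have : IsIso (IsbellAux.φ adj) := IsbellAux.instIsIsoFunctorOppositeTypeφ adj
  exact ⟨MonadIso.mk (@asIso _ _ _ _ (IsbellAux.φ adj) this)
    (fun X => congr_app (IsbellAux.unit_compat adj) X)
    (fun X => (congr_app (IsbellAux.mul_compat adj) X).trans (Category.assoc _ _ _).symm)⟩

end
end

section
/- Let A be a small category with finite limits and finite colimits, let i : A → Ind A be the canonical inclusion with codensity monad T_i = Ran_i i, and let 𝒪 : Ind A ⇄ Pro A : 𝒮 be the restricted Isbell adjunction. Then the monad on Ind A induced by 𝒪 ⊣ 𝒮 is the codensity monad T_i, and 𝒮 lifts along the forgetful functor U_{T_i} : Alg(T_i) → Ind A to a functor C : Pro A → Alg(T_i) with U_{T_i} ∘ C ≅ 𝒮. -/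
universe u'

open CategoryTheory Functor Limits

noncomputable section

variable (A : Type u') [SmallCategory A]

/-- The Ind-completion of `A` : `Lex(Aᵒᵖ, Set) ⊆ Set^{Aᵒᵖ}`. -/
abbrev IndCat := ObjectProperty.FullSubcategory (fun P : Aᵒᵖ ⥤ Type u' => PreservesFiniteLimits P)

/-- The Pro-completion of `A` : `(Lex(A, Set))ᵒᵖ ⊆ (Set^A)ᵒᵖ`. -/
abbrev ProCat := (ObjectProperty.FullSubcategory (fun Q : A ⥤ Type u' => PreservesFiniteLimits Q))ᵒᵖ

/-- Inclusion `Ind A ⊆ Set^{Aᵒᵖ}`. -/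
abbrev iotaInd : IndCat A ⥤ (Aᵒᵖ ⥤ Type u') := ObjectProperty.ι _

/-- Inclusion `Pro A ⊆ (Set^A)ᵒᵖ`. -/
abbrev iotaPro : ProCat A ⥤ (A ⥤ Type u')ᵒᵖ := (ObjectProperty.ι _).op

/-- The canonical inclusion `i : A ⥤ Ind A`, induced by the Yoneda embedding. -/
def indInc : A ⥤ IndCat A :=
  ObjectProperty.lift _ yoneda (fun _ => inferInstance)

open Opposite

namespace IsbellAux

/-- Concrete Isbell conjugation `O`: `P ↦ (a ↦ (P ⟶ y a))`. -/
@[simps]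
def OO : (Aᵒᵖ ⥤ Type u') ⥤ (A ⥤ Type u')ᵒᵖ where
  obj P := op
    { obj := fun a => P ⟶ yoneda.obj a
      map := fun f => ↾fun g => g ≫ yoneda.map f
      map_id := by intro a; ext g : 3; simp
      map_comp := by intro a b c f f'; ext g : 3; simp }
  map {P P'} φ := Quiver.Hom.op
    { app := fun a => ↾fun g => φ ≫ g
      naturality := by intro a b f; ext g : 3; dsimp; simp }
  map_id := by intro P; apply Quiver.Hom.unop_inj; aesop_cat
  map_comp := by intro P Q R f g; apply Quiver.Hom.unop_inj; aesop_cat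

/-- Concrete Isbell conjugation `Spec`: `Q ↦ (a ↦ (Q ⟶ A(a,-)))`. -/
@[simps]
def SS : (A ⥤ Type u')ᵒᵖ ⥤ (Aᵒᵖ ⥤ Type u') where
  obj E :=
    { obj := fun a => E.unop ⟶ coyoneda.obj a
      map := fun f => ↾fun g => g ≫ coyoneda.map f
      map_id := by intro a; ext g : 3; simp
      map_comp := by intro a b c f f'; ext g : 3; simp }
  map {E E'} ψ :=
    { app := fun a => ↾fun g => ψ.unop ≫ g
      naturality := by intro a b f; ext g : 3; dsimp; simp }

/-- The hom-equivalence of the concrete Isbell adjunction. -/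
@[simps]
def isbellEquiv (P : Aᵒᵖ ⥤ Type u') (E : (A ⥤ Type u')ᵒᵖ) :
    ((OO A).obj P ⟶ E) ≃ (P ⟶ (SS A).obj E) where
  toFun f :=
    { app := fun a => ↾fun x =>
        { app := fun b => ↾fun q => (f.unop.app b q).app a x
          naturality := by
            intro b b' k
            ext q : 3
            dsimp
            have h1 := ConcreteCategory.congr_hom (f.unop.naturality k) q
            dsimp at h1
            rw [h1]
            rfl }
      naturality := by
        intro a a' h
        ext x : 3
        dsimp
        apply NatTrans.ext; funext b; ext q : 3
        dsimp
        have h2 := ConcreteCategory.congr_hom ((f.unop.app b q).naturality h) x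
        dsimp at h2
        exact h2 }
  invFun g := Quiver.Hom.op
    { app := fun b => ↾fun q =>
        { app := fun a => ↾fun x => (g.app a x).app b q
          naturality := by
            intro a a' h
            ext x : 3
            dsimp
            have h2 := ConcreteCategory.congr_hom (g.naturality h) x
            dsimp at h2
            rw [h2]
            rfl }
      naturality := by
        intro b b' k
        ext q : 3
        dsimp
        ext a x
        dsimp
        have h1 := ConcreteCategory.congr_hom ((g.app a x).naturality k) q
        dsimp at h1
        rw [h1] }
  left_inv f := rfl
  right_inv g := rfl

end IsbellAux
namespace IsbellAux

/-- Naturality of the Isbell hom-equivalence, left. -/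
lemma isbell_left_symm {P P' : Aᵒᵖ ⥤ Type u'} (φ : P ⟶ P') {E : (A ⥤ Type u')ᵒᵖ}
    (g : P' ⟶ (SS A).obj E) :
    (isbellEquiv A P E).symm (φ ≫ g) = (OO A).map φ ≫ (isbellEquiv A P' E).symm g := by
  apply Quiver.Hom.unop_inj
  ext b q
  rfl

/-- Naturality of the Isbell hom-equivalence, right. -/
lemma isbell_right {P : Aᵒᵖ ⥤ Type u'} {E E' : (A ⥤ Type u')ᵒᵖ}
    (f : (OO A).obj P ⟶ E) (g : E ⟶ E') :
    isbellEquiv A P E' (f ≫ g) = isbellEquiv A P E f ≫ (SS A).map g := by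
  ext a x
  rfl

/-- The concrete ambient Isbell adjunction. -/
def adjConc : OO A ⊣ SS A :=
  Adjunction.mkOfHomEquiv
    { homEquiv := isbellEquiv A
      homEquiv_naturality_left_symm := fun f g => isbell_left_symm A f g
      homEquiv_naturality_right := fun f g => isbell_right A f g }

/-- `OO` preserves colimits, being a left adjoint. -/
instance : PreservesColimitsOfSize.{u', u'} (OO A) :=
  (adjConc A).leftAdjoint_preservesColimits

/-- The canonical comparison `ysharp ≅ yoneda ⋙ OO`. -/
def eOy : ysharp A ≅ yoneda ⋙ OO A :=
  NatIso.ofComponents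
    (fun a => Iso.op
      (NatIso.ofComponents (fun b => Equiv.toIso yonedaEquiv)
        (by
          intro b b' k
          ext g : 3
          dsimp
          erw [yonedaEquiv_comp]
          rfl)))
    (by
      intro a a' f
      apply Quiver.Hom.unop_inj
      ext b (g : yoneda.obj a' ⟶ yoneda.obj b)
      exact yonedaEquiv_naturality g f)

end IsbellAux
namespace IsbellAux

/-- `OO` agrees with the abstract left Kan extension. -/
instance OOIsLan : (OO A).IsLeftKanExtension (eOy A).hom := by
  have e : uliftYoneda.{u'} (C := A) ⋙ 𝟭 _ ≅ yoneda (C := A) := uliftYonedaIsoYoneda.{u'} (C := A)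
  rw [Functor.isLeftKanExtension_iff_postcomp₁ (G := 𝟭 (Aᵒᵖ ⥤ Type u')) e]
  exact (Presheaf.isLeftKanExtension_along_uliftYoneda_iff.{0} (𝟭 (Aᵒᵖ ⥤ Type u') ⋙ OO A) _).2
    ⟨Iso.isIso_hom (eOy A ≪≫ isoWhiskerRight e.symm (OO A) ≪≫ Functor.associator _ _ _),
      inferInstance⟩

def OOIsoLan : OO A ≅ yoneda.leftKanExtension (ysharp A) :=
  Functor.leftKanExtensionUnique (OO A) (eOy A).hom _ (yoneda.leftKanExtensionUnit (ysharp A))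

/-- Values of `OO` are left exact copresheaves. -/
instance lexOO (P : Aᵒᵖ ⥤ Type u') : PreservesFiniteLimits ((OO A).obj P).unop := by
  have e : (yoneda ⋙ coyoneda.obj (op P)) ≅ ((OO A).obj P).unop :=
    NatIso.ofComponents (fun a => Iso.refl _) (by intro a b f; ext g : 3; rfl)
  have : PreservesFiniteLimits (yoneda ⋙ coyoneda.obj (op P)) := by
    have h1 : PreservesFiniteLimits (yoneda : A ⥤ _) :=
      PreservesLimitsOfSize.preservesFiniteLimits.{0,0} _
    have h2 : PreservesFiniteLimits (coyoneda.obj (op P)) :=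
      PreservesLimitsOfSize.preservesFiniteLimits.{0,0} _
    exact comp_preservesFiniteLimits _ _
  exact preservesFiniteLimits_of_natIso e

/-- Values of `SS` are left exact presheaves. -/
instance lexSS (E : (A ⥤ Type u')ᵒᵖ) : PreservesFiniteLimits ((SS A).obj E) := by
  have e : (coyoneda ⋙ coyoneda.obj (op E.unop)) ≅ (SS A).obj E :=
    NatIso.ofComponents (fun a => Iso.refl _) (by intro a b f; ext g : 3; rfl)
  have : PreservesFiniteLimits (coyoneda ⋙ coyoneda.obj (op E.unop)) := by
    have h1 : PreservesFiniteLimits (coyoneda : Aᵒᵖ ⥤ _) :=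
      PreservesLimitsOfSize.preservesFiniteLimits.{0,0} _
    have h2 : PreservesFiniteLimits (coyoneda.obj (op E.unop)) :=
      PreservesLimitsOfSize.preservesFiniteLimits.{0,0} _
    exact comp_preservesFiniteLimits _ _
  exact preservesFiniteLimits_of_natIso e

end IsbellAux



namespace IsbellAux

/-- The restricted functor `𝒪 : Ind A ⥤ Pro A`. -/
def Ores : IndCat A ⥤ ProCat A :=
  (ObjectProperty.lift _ ((iotaInd A ⋙ OO A).leftOp)
    (fun P => lexOO A (P.unop.obj))).rightOp

/-- The restricted functor `𝒮 : Pro A ⥤ Ind A`. -/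
def Sres : ProCat A ⥤ IndCat A :=
  ObjectProperty.lift _ (iotaPro A ⋙ SS A) (fun Q => lexSS A ((iotaPro A).obj Q))

/-- `𝒪` commutes with the inclusions. -/
def OresComm : Ores A ⋙ iotaPro A ≅ iotaInd A ⋙ OO A :=
  NatIso.ofComponents (fun X => Iso.refl _) (by intro X Y f; simp [Ores]; rfl)

/-- `𝒮` commutes with the inclusions. -/
def SresComm : Sres A ⋙ iotaInd A ≅ iotaPro A ⋙ SS A :=
  NatIso.ofComponents (fun X => Iso.refl _) (by intro X Y f; simp [Sres])

/-- The restricted Isbell adjunction. -/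
def adjRes : Ores A ⊣ Sres A :=
  Adjunction.mkOfHomEquiv
    { homEquiv := fun X Y =>
        ({ toFun := fun f => ObjectProperty.homMk
              (isbellEquiv A ((iotaInd A).obj X) ((iotaPro A).obj Y) ((iotaPro A).map f))
           invFun := fun g => (ObjectProperty.homMk
              ((isbellEquiv A ((iotaInd A).obj X) ((iotaPro A).obj Y)).symm g.hom).unop).op
           left_inv := fun f => rfl
           right_inv := fun g => rfl } :
          ((Ores A).obj X ⟶ Y) ≃ (X ⟶ (Sres A).obj Y))
      homEquiv_naturality_left_symm := by
        intro P P' E f g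
        apply (iotaPro A).map_injective
        apply Quiver.Hom.unop_inj
        ext b q
        rfl
      homEquiv_naturality_right := by
        intro P E E' f g
        apply (iotaInd A).map_injective
        ext a x
        rfl }

end IsbellAux



namespace IsbellAux

/-- The coyoneda classifier of an element. -/
@[simps]
def clsf {Q : A ⥤ Type u'} {c : A} (e : Q.obj c) : coyoneda.obj (op c) ⟶ Q where
  app d := ↾fun g => Q.map g e
  naturality := by
    intro d d' k
    ext g : 3
    dsimp
    exact FunctorToTypes.map_comp_apply Q g k e

variable {A}

lemma clsf_id {c : A} : clsf A (𝟙 c) = 𝟙 (coyoneda.obj (op c)) := by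
  ext d g
  simp [clsf]

lemma clsf_comp {Q Q' : A ⥤ Type u'} {c : A} (e : Q.obj c) (t : Q ⟶ Q') :
    clsf A e ≫ t = clsf A (t.app c e) := by
  ext d g
  exact ConcreteCategory.congr_hom (t.naturality g) e

lemma clsf_map {Q : A ⥤ Type u'} {c c' : A} (f : c ⟶ c') (e : Q.obj c) :
    clsf A (Q.map f e) = coyoneda.map f.op ≫ clsf A e := by
  ext d g
  dsimp [clsf]
  rw [FunctorToTypes.map_comp_apply]

lemma ssext {E : (A ⥤ Type u')ᵒᵖ} {b : Aᵒᵖ} {φ ψ : ((SS A).obj E).obj b}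
    (h : ∀ (c : A) (e : E.unop.obj c), φ.app c e = ψ.app c e) : φ = ψ :=
  NatTrans.ext (funext fun c => ConcreteCategory.hom_ext _ _ (h c))

variable (A)

/-- The counit exhibiting `SS` as right Kan extension of `yoneda` along `ysharp`. -/
@[simps]
def epsS : ysharp A ⋙ SS A ⟶ (yoneda : A ⥤ Aᵒᵖ ⥤ Type u') where
  app a :=
    { app := fun b => ↾fun φ => φ.app a (𝟙 a)
      naturality := by
        intro b b' k
        ext φ : 3
        rfl }
  naturality := by
    intro a a' f
    ext b φ
    have h := ConcreteCategory.congr_hom (φ.naturality f) (𝟙 a)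
    have e1 : f ≫ 𝟙 a' = 𝟙 a ≫ f := by simp
    change φ.app a' (f ≫ 𝟙 a') = φ.app a (𝟙 a) ≫ f
    rw [e1]
    exact h

section RanSS

variable {A}
variable (H : (A ⥤ Type u')ᵒᵖ ⥤ (Aᵒᵖ ⥤ Type u')) (γ : ysharp A ⋙ H ⟶ yoneda)

/-- The universal comparison map into `SS`. -/
def deltaS : H ⟶ SS A where
  app E :=
    { app := fun b => ↾fun ξ =>
        { app := fun c => ↾fun e => (γ.app c).app b ((H.map (clsf A e).op).app b ξ)
          naturality := by
            intro c c' f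
            ext e : 3
            dsimp
            rw [clsf_map]
            have hy : ((clsf A e).op ≫ (ysharp A).map f : E ⟶ (ysharp A).obj c')
                = (coyoneda.map f.op ≫ clsf A e).op := rfl
            have h1 : (H.map ((coyoneda.map f.op ≫ clsf A e).op)).app b ξ
                = (H.map ((ysharp A).map f)).app b ((H.map (clsf A e).op).app b ξ) := by
              rw [← hy]
              exact ConcreteCategory.congr_hom
                (NatTrans.congr_app (H.map_comp (clsf A e).op ((ysharp A).map f)) b) ξ
            rw [h1]
            have h2 := ConcreteCategory.congr_hom (congr_app (γ.naturality f) b)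
              ((H.map (clsf A e).op).app b ξ)
            dsimp [ysharp] at h2
            exact h2 }
      naturality := by
        intro b b' k
        ext ξ : 3
        apply ssext
        intro c e
        dsimp
        have h1 := ConcreteCategory.congr_hom ((H.map (clsf A e).op).naturality k) ξ
        dsimp at h1
        have h2 := ConcreteCategory.congr_hom ((γ.app c).naturality k) ((H.map (clsf A e).op).app b ξ)
        dsimp [ysharp] at h2
        exact (congrArg (fun y => (γ.app c).app b' y) h1).trans h2 }
  naturality := by
    intro E E' ψ
    ext b ξ
    apply ssext
    intro c e
    dsimp
    have hc : (ψ ≫ (clsf A e).op : E ⟶ (ysharp A).obj c)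
        = (clsf A (ψ.unop.app c e)).op := by
      apply Quiver.Hom.unop_inj
      exact clsf_comp e ψ.unop
    have h1 : (H.map (clsf A e).op).app b ((H.map ψ).app b ξ)
        = (H.map (clsf A (ψ.unop.app c e)).op).app b ξ := by
      rw [← hc]
      exact (ConcreteCategory.congr_hom
        (NatTrans.congr_app (H.map_comp ψ (clsf A e).op) b) ξ).symm
    exact congrArg (fun y => (γ.app c).app b y) h1

lemma deltaS_coherence : whiskerLeft (ysharp A) (deltaS H γ) ≫ epsS A = γ := by
  ext a b ξ
  dsimp [deltaS, epsS]
  change (γ.app a).app b ((H.map (clsf A (𝟙 a)).op).app b ξ) = _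
  rw [clsf_id]
  change (γ.app a).app b ((H.map (𝟙 _)).app b ξ) = _
  rw [H.map_id]
  rfl

lemma deltaS_unique (m : H ⟶ SS A) (hm : whiskerLeft (ysharp A) m ≫ epsS A = γ) :
    m = deltaS H γ := by
  ext E b ξ
  apply ssext
  intro c e
  have hnat := ConcreteCategory.congr_hom (congr_app (m.naturality ((clsf A e).op : E ⟶ (ysharp A).obj c)) b) ξ
  dsimp at hnat
  have hval := ConcreteCategory.congr_hom (congr_arg (fun (t : _ ⟶ coyoneda.obj b) => t.app c)
    hnat) (𝟙 c)
  dsimp at hval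
  have hco := ConcreteCategory.congr_hom (congr_app (congr_app hm c) b) ((H.map (clsf A e).op).app b ξ)
  dsimp [epsS, ysharp] at hco
  dsimp [deltaS]
  calc ((m.app E).app b ξ).app c e
      = ((m.app E).app b ξ).app c ((unop E).map (𝟙 c) e) := by
        rw [FunctorToTypes.map_id_apply]
    _ = ((m.app (op (coyoneda.obj (op c)))).app b
          ((H.map (clsf A e).op).app b ξ)).app c (𝟙 c) := hval.symm
    _ = (γ.app c).app b ((H.map (clsf A e).op).app b ξ) := hco

end RanSS

/-- `SS` is a right Kan extension of `yoneda` along `ysharp`. -/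
instance SSIsRan : (SS A).IsRightKanExtension (epsS A) :=
  ⟨⟨IsTerminal.ofUniqueHom
      (fun G => CostructuredArrow.homMk (deltaS G.left G.hom) (deltaS_coherence G.left G.hom))
      (fun G m => by
        apply CostructuredArrow.hom_ext
        exact deltaS_unique G.left G.hom m.left (CostructuredArrow.w m))⟩⟩

end IsbellAux



namespace IsbellAux

/-- The counit exhibiting `𝒪 ⋙ 𝒮` as codensity monad of `indInc`. -/
def epsT : indInc A ⋙ (Ores A ⋙ Sres A) ⟶ indInc A where
  app a := ObjectProperty.homMk (show ((SS A).obj ((OO A).obj (yoneda.obj a)) ⟶ yoneda.obj a) from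
    { app := fun b => ↾fun φ => φ.app a (𝟙 (yoneda.obj a))
      naturality := by
        intro b b' k
        ext φ : 3
        rfl })
  naturality := by
    intro a a' f
    apply (iotaInd A).map_injective
    ext b φ
    have h := ConcreteCategory.congr_hom (φ.naturality f) (𝟙 (yoneda.obj a))
    exact (h : φ.app a' (yoneda.map f) = φ.app a (𝟙 (yoneda.obj a)) ≫ f)


end IsbellAux


namespace IsbellAux

lemma adjRes_unit_app (X : IndCat A) :
    (adjRes A).unit.app X = ObjectProperty.homMk
      (isbellEquiv A ((iotaInd A).obj X) ((iotaPro A).obj ((Ores A).obj X))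
        (𝟙 ((OO A).obj ((iotaInd A).obj X)))) := by
  rfl

/-- Reinterpret an element of `𝒪 X` at `c` as a morphism `X ⟶ i c`. -/
def toHom {X : IndCat A} {c : A} (q : (unop ((OO A).obj ((iotaInd A).obj X))).obj c) :
    X ⟶ (indInc A).obj c := ObjectProperty.homMk q

lemma toHom_map {X : IndCat A} {c c' : A} (f : c ⟶ c')
    (q : (unop ((OO A).obj ((iotaInd A).obj X))).obj c) :
    toHom A ((unop ((OO A).obj ((iotaInd A).obj X))).map f q)
      = toHom A q ≫ (indInc A).map f := rfl

lemma toHom_id (a : A) :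
    toHom A (X := (indInc A).obj a) (c := a) (𝟙 (yoneda.obj a) : (unop ((OO A).obj ((iotaInd A).obj
      ((indInc A).obj a)))).obj a) = 𝟙 ((indInc A).obj a) := rfl

lemma unit_epsT (a : A) :
    (adjRes A).unit.app ((indInc A).obj a) ≫ (epsT A).app a = 𝟙 ((indInc A).obj a) := by
  apply (iotaInd A).map_injective
  rw [adjRes_unit_app]
  ext b x
  rfl

lemma epsT_unit (a : A) :
    (epsT A).app a ≫ (adjRes A).unit.app ((indInc A).obj a)
      = 𝟙 ((Ores A ⋙ Sres A).obj ((indInc A).obj a)) := by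
  apply (iotaInd A).map_injective
  rw [adjRes_unit_app]
  ext b φ
  apply ssext
  intro c q
  have hq : yoneda.map (yonedaEquiv q) = q := by
    apply yonedaEquiv.injective
    rw [yonedaEquiv_yoneda_map]
  have h3 : φ.app c (yoneda.map (yonedaEquiv q)) =
      φ.app a (𝟙 (yoneda.obj a)) ≫ yonedaEquiv q :=
    ConcreteCategory.congr_hom (φ.naturality (yonedaEquiv q)) (𝟙 (yoneda.obj a))
  change q.app b (φ.app a (𝟙 (yoneda.obj a))) = φ.app c q
  conv_rhs => rw [← hq]
  rw [h3]
  conv_lhs => rw [← hq]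
  rfl

section RanT

variable {A}
variable (H : IndCat A ⥤ IndCat A) (γ : indInc A ⋙ H ⟶ indInc A)

/-- The universal comparison map into `𝒪 ⋙ 𝒮`. -/
def deltaT : H ⟶ Ores A ⋙ Sres A where
  app X := ObjectProperty.homMk (show ((iotaInd A).obj (H.obj X) ⟶
      (SS A).obj ((OO A).obj ((iotaInd A).obj X))) from
    { app := fun b => ↾fun ξ =>
        { app := fun c => ↾fun q => (H.map (toHom A q) ≫ γ.app c).hom.app b ξ
          naturality := by
            intro c c' f
            ext q : 3
            change (H.map (toHom A ((unop ((OO A).obj ((iotaInd A).obj X))).map f q))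
                ≫ γ.app c').hom.app b ξ
              = (H.map (toHom A q) ≫ γ.app c).hom.app b ξ ≫ f
            rw [toHom_map, H.map_comp, Category.assoc]
            have hγ : H.map ((indInc A).map f) ≫ γ.app c'
                = γ.app c ≫ (indInc A).map f := γ.naturality f
            rw [hγ]
            rfl }
      naturality := by
        intro b b' k
        ext ξ : 3
        apply ssext
        intro c q
        exact ConcreteCategory.congr_hom ((H.map (toHom A q) ≫ γ.app c).hom.naturality k) ξ })
  naturality := by
    intro X X' g
    apply (iotaInd A).map_injective
    ext b ξ
    apply ssext
    intro c q
    change (H.map (toHom A q) ≫ γ.app c).hom.app b ((H.map g).hom.app b ξ)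
      = (H.map (toHom A (((OO A).map ((iotaInd A).map g)).unop.app c q))
          ≫ γ.app c).hom.app b ξ
    have hgq : toHom A (((OO A).map ((iotaInd A).map g)).unop.app c q)
        = g ≫ toHom A q := rfl
    rw [hgq, H.map_comp, Category.assoc]
    rfl

lemma deltaT_coherence : whiskerLeft (indInc A) (deltaT H γ) ≫ epsT A = γ := by
  refine NatTrans.ext (funext fun a => ?_)
  apply (iotaInd A).map_injective
  ext b ξ
  change (H.map (toHom A (X := (indInc A).obj a) (c := a) (𝟙 (yoneda.obj a))) ≫ γ.app a).hom.app b ξ = (γ.app a).hom.app b ξ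
  rw [toHom_id, H.map_id, Category.id_comp]

lemma deltaT_unique (m : H ⟶ Ores A ⋙ Sres A)
    (hm : whiskerLeft (indInc A) m ≫ epsT A = γ) : m = deltaT H γ := by
  refine NatTrans.ext (funext fun X => ?_)
  apply (iotaInd A).map_injective
  ext b ξ
  apply ssext
  intro c q
  have hnat := ConcreteCategory.congr_hom (congr_app (congr_arg (iotaInd A).map
    (m.naturality (toHom A q))) b) ξ
  have hco := ConcreteCategory.congr_hom (congr_app (congr_arg (iotaInd A).map (congr_app hm c)) b)
    (((iotaInd A).map (H.map (toHom A q))).app b ξ)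
  have hnat' : (((iotaInd A).map (m.app ((indInc A).obj c))).app b
        (((iotaInd A).map (H.map (toHom A q))).app b ξ))
      = ((SS A).map ((OO A).map ((iotaInd A).map (toHom A q)))).app b
          (((iotaInd A).map (m.app X)).app b ξ) := hnat
  have hval := ConcreteCategory.congr_hom (congr_arg
    (fun (t : ((SS A).obj ((OO A).obj ((iotaInd A).obj ((indInc A).obj c)))).obj b)
      => t.app c) hnat') (𝟙 (yoneda.obj c))
  have hco' : (((iotaInd A).map (m.app ((indInc A).obj c))).app b
        (((iotaInd A).map (H.map (toHom A q))).app b ξ)).app c (𝟙 (yoneda.obj c))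
      = ((iotaInd A).map (γ.app c)).app b
          (((iotaInd A).map (H.map (toHom A q))).app b ξ) := hco
  change (((iotaInd A).map (m.app X)).app b ξ).app c q
    = (H.map (toHom A q) ≫ γ.app c).hom.app b ξ
  refine Eq.trans ?_ (hval.symm.trans hco')
  exact (congr_arg ((((iotaInd A).map (m.app X)).app b ξ).app c)
    (Category.comp_id ((iotaInd A).map (toHom A q)))).symm

end RanT

end IsbellAux



namespace IsbellAux

section Monadic

variable [(indInc A).HasRightKanExtension (indInc A)]

/-- `𝒪 ⋙ 𝒮` is a right Kan extension of `indInc` along itself. -/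
instance TIsRan : (Ores A ⋙ Sres A).IsRightKanExtension (epsT A) :=
  ⟨⟨IsTerminal.ofUniqueHom
      (fun G => CostructuredArrow.homMk (deltaT G.left G.hom)
        (deltaT_coherence G.left G.hom))
      (fun G m => by
        apply CostructuredArrow.hom_ext
        exact deltaT_unique G.left G.hom m.left (CostructuredArrow.w m))⟩⟩

/-- Comparison morphism to the codensity functor. -/
def PhiHom : (Ores A ⋙ Sres A) ⟶ (indInc A).rightKanExtension (indInc A) :=
  ((indInc A).rightKanExtension (indInc A)).liftOfIsRightKanExtension
    ((indInc A).rightKanExtensionCounit (indInc A)) _ (epsT A)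

/-- Inverse comparison morphism. -/
def PhiInv : (indInc A).rightKanExtension (indInc A) ⟶ (Ores A ⋙ Sres A) :=
  (Ores A ⋙ Sres A).liftOfIsRightKanExtension (epsT A) _
    ((indInc A).rightKanExtensionCounit (indInc A))

lemma PhiHom_fac : whiskerLeft (indInc A) (PhiHom A) ≫
    (indInc A).rightKanExtensionCounit (indInc A) = epsT A :=
  Functor.liftOfIsRightKanExtension_fac _ _ _ _

lemma PhiInv_fac : whiskerLeft (indInc A) (PhiInv A) ≫ epsT A =
    (indInc A).rightKanExtensionCounit (indInc A) :=
  Functor.liftOfIsRightKanExtension_fac _ _ _ _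

lemma Phi_hom_inv : PhiHom A ≫ PhiInv A = 𝟙 _ := by
  apply Functor.hom_ext_of_isRightKanExtension _ (epsT A)
  rw [whiskerLeft_comp, Category.assoc, PhiInv_fac, PhiHom_fac]
  simp

lemma Phi_inv_hom : PhiInv A ≫ PhiHom A = 𝟙 _ := by
  apply Functor.hom_ext_of_isRightKanExtension _
    ((indInc A).rightKanExtensionCounit (indInc A))
  rw [whiskerLeft_comp, Category.assoc, PhiHom_fac, PhiInv_fac]
  simp

/-- The underlying natural isomorphism of the monad comparison. -/
def PhiIso : ((adjRes A).toMonad : IndCat A ⥤ IndCat A) ≅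
    (codensityMonad (indInc A) : IndCat A ⥤ IndCat A) where
  hom := PhiHom A
  inv := PhiInv A
  hom_inv_id := Phi_hom_inv A
  inv_hom_id := Phi_inv_hom A

lemma mu_epsT (a : A) :
    (adjRes A).toMonad.μ.app ((indInc A).obj a) ≫ (epsT A).app a
      = (Ores A ⋙ Sres A).map ((epsT A).app a) ≫ (epsT A).app a := by
  have hiso : IsIso ((adjRes A).unit.app ((indInc A).obj a)) :=
    ⟨(epsT A).app a, unit_epsT A a, epsT_unit A a⟩
  refine (cancel_epi ((Ores A ⋙ Sres A).map ((adjRes A).unit.app ((indInc A).obj a)))).1 ?_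
  have hre : (Ores A ⋙ Sres A).map ((adjRes A).unit.app ((indInc A).obj a)) ≫
      (Ores A ⋙ Sres A).map ((epsT A).app a) = 𝟙 _ := by
    rw [← Functor.map_comp, unit_epsT]
    exact (Ores A ⋙ Sres A).map_id _
  have hru := (adjRes A).toMonad.right_unit ((indInc A).obj a)
  change (Ores A ⋙ Sres A).map ((adjRes A).unit.app ((indInc A).obj a)) ≫
    (adjRes A).toMonad.μ.app ((indInc A).obj a) = 𝟙 _ at hru
  conv_rhs => rw [← Category.assoc, hre]
  exact (Category.assoc _ _ _).symm.trans (congrArg (fun t => t ≫ (epsT A).app a) hru)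

lemma h_eta : ((adjRes A).unit ≫ PhiHom A : 𝟭 (IndCat A) ⟶ _)
    = Codensity.unit (indInc A) := by
  apply Functor.hom_ext_of_isRightKanExtension _
    ((indInc A).rightKanExtensionCounit (indInc A))
  refine NatTrans.ext (funext fun a => ?_)
  simp only [whiskerLeft_comp, NatTrans.comp_app, whiskerLeft_app, Category.assoc]
  have h1 := congr_app (PhiHom_fac A) a
  dsimp at h1 ⊢
  rw [h1]
  rw [unit_epsT]
  exact (Codensity.unit_fac (indInc A) a).symm

lemma h_mu : ((adjRes A).toMonad.μ ≫ PhiHom A :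
      (Ores A ⋙ Sres A) ⋙ (Ores A ⋙ Sres A) ⟶ _)
    = whiskerRight (PhiHom A) (Ores A ⋙ Sres A) ≫
      whiskerLeft ((indInc A).rightKanExtension (indInc A)) (PhiHom A) ≫
      Codensity.mul (indInc A) := by
  apply Functor.hom_ext_of_isRightKanExtension _
    ((indInc A).rightKanExtensionCounit (indInc A))
  refine NatTrans.ext (funext fun a => ?_)
  simp only [whiskerLeft_comp, NatTrans.comp_app, whiskerLeft_app, whiskerRight_app,
    Category.assoc]
  have h1 := congr_app (PhiHom_fac A) a
  dsimp at h1
  have h2 := Codensity.mul_fac (indInc A) a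
  dsimp at h2 ⊢
  rw [h2]
  have h3 : (Ores A ⋙ Sres A).map (((indInc A).rightKanExtensionCounit (indInc A)).app a)
      ≫ (PhiHom A).app ((indInc A).obj a)
      = (PhiHom A).app (((indInc A).rightKanExtension (indInc A)).obj ((indInc A).obj a))
        ≫ ((indInc A).rightKanExtension (indInc A)).map
            (((indInc A).rightKanExtensionCounit (indInc A)).app a) :=
    (PhiHom A).naturality _
  rw [← Category.assoc ((PhiHom A).app _), ← h3]
  rw [Category.assoc, h1]
  rw [← Functor.comp_map, ← Functor.map_comp_assoc, h1]
  have hmu := mu_epsT A a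
  change (Sres A).map ((adjRes A).counit.app ((Ores A).obj ((indInc A).obj a)))
      ≫ (epsT A).app a
    = (Ores A ⋙ Sres A).map ((epsT A).app a) ≫ (epsT A).app a at hmu
  have e : ((adjRes A).toMonad.μ ≫ PhiHom A).app ((indInc A).obj a)
      = (adjRes A).toMonad.μ.app ((indInc A).obj a) ≫ (PhiHom A).app ((indInc A).obj a) := rfl
  refine (congrArg (fun t => t ≫ ((indInc A).rightKanExtensionCounit (indInc A)).app a) e).trans ?_
  exact (Category.assoc _ _ _).trans ((congrArg
    (fun t => (adjRes A).toMonad.μ.app ((indInc A).obj a) ≫ t) h1).trans (mu_epsT A a))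

/-- The monad of the restricted Isbell adjunction is the codensity monad. -/
def monadIso : (adjRes A).toMonad ≅ codensityMonad (indInc A) :=
  MonadIso.mk (PhiIso A)
    (fun X => congr_app (h_eta A) X)
    (fun X => by
      have h := congr_app (h_mu A) X
      simp only [NatTrans.comp_app, whiskerLeft_app, whiskerRight_app, Category.assoc] at h ⊢
      exact h)

/-- The lift of `𝒮` to the Eilenberg–Moore category of the codensity monad. -/
def Cfun : ProCat A ⥤ (codensityMonad (indInc A)).Algebra :=
  Monad.comparison (adjRes A) ⋙ Monad.algebraFunctorOfMonadHom (monadIso A).inv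

/-- The lift commutes with the forgetful functor. -/
def CfunForget : Cfun A ⋙ (codensityMonad (indInc A)).forget ≅ Sres A :=
  NatIso.ofComponents (fun Y => Iso.refl _) (by intro X Y f; dsimp [Cfun]; simp; rfl)

end Monadic

end IsbellAux


theorem restricted_isbell_induces_codensity_and_spec_lifts_to_algebras
    [HasFiniteLimits A] [HasFiniteColimits A]
    [(indInc A).HasRightKanExtension (indInc A)] :
    Nonempty (Σ' (𝒪 : IndCat A ⥤ ProCat A) (𝒮 : ProCat A ⥤ IndCat A) (adj : 𝒪 ⊣ 𝒮)
      (_ : 𝒪 ⋙ iotaPro A ≅ iotaInd A ⋙ yoneda.leftKanExtension (ysharp A))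
      (_ : 𝒮 ⋙ iotaInd A ≅ iotaPro A ⋙ (ysharp A).rightKanExtension yoneda)
      (_ : adj.toMonad ≅ codensityMonad (indInc A))
      (C : ProCat A ⥤ (codensityMonad (indInc A)).Algebra),
        C ⋙ (codensityMonad (indInc A)).forget ≅ 𝒮) := by
  exact ⟨⟨IsbellAux.Ores A, IsbellAux.Sres A, IsbellAux.adjRes A,
    (IsbellAux.OresComm A) ≪≫ isoWhiskerLeft (iotaInd A) (IsbellAux.OOIsoLan A),
    (IsbellAux.SresComm A) ≪≫ isoWhiskerLeft (iotaPro A)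
      (Functor.rightKanExtensionUnique (IsbellAux.SS A) (IsbellAux.epsS A) _
        ((ysharp A).rightKanExtensionCounit yoneda)),
    IsbellAux.monadIso A, IsbellAux.Cfun A, IsbellAux.CfunForget A⟩⟩

end
end
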